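/- Let φ : ℝ² → ℝ be twice continuously differentiable, let K, γ ∈ ℝ, and fix (x,y) ∈ ℝ². For h ≠ 0 define the difference operators Dx_h φ(x,y) := (φ(x+h,y) − φ(x,y))/h, Dxx_h φ(x,y) := (φ(x+h,y) − 2·φ(x,y) + φ(x−h,y))/h², Dyy_h φ(x,y) := (φ(x,y+h) − 2·φ(x,y) + φ(x,y−h))/h², and define S_h(x,y) := Dxx_h φ(x,y)·( Dxx_h φ(x−h,y)·(K − ((γ+1)/2)·(Dx_h φ(x+h,y) + Dx_h φ(x−h,y))) + Dyy_h φ(x−h,y) ) + Dxx_h φ(x−h,y)·( Dxx_h φ(x,y)·(K − ((γ+1)/2)·(Dx_h φ(x+h,y) + Dx_h φ(x−h,y))) + Dyy_h φ(x,y) ). Then S_h(x,y) tends, as h → 0, to 2·∂²φ/∂x²(x,y)·( (K − (γ+1)·∂φ/∂x(x,y))·∂²φ/∂x²(x,y) + ∂²φ/∂y²(x,y) ). In particular, if φ satisfies the stationary Falkowich–Karman equation ∂²φ/∂x²·(K − (γ+1)·∂φ/∂x) + ∂²φ/∂y² = 0 at (x,y), then S_h(x,y) → 0 as h → 0. -/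

import Mathlib

open Filter Topology

open Set


lemma mvt_slope (f f' : ℝ → ℝ) (hf : ∀ t, HasDerivAt f (f' t) t)
    (a b : ℝ) (hab : a < b) :
    ∃ ξ, a < ξ ∧ ξ < b ∧ (f b - f a) / (b - a) = f' ξ := by
  obtain ⟨c, hc, hceq⟩ := exists_hasDerivAt_eq_slope f f' hab
    ((continuous_iff_continuousAt.2 fun t => (hf t).continuousAt).continuousOn)
    (fun t _ => hf t)
  exact ⟨c, hc.1, hc.2, hceq.symm⟩

lemma second_diff_pos (f f' f'' : ℝ → ℝ)
    (hf : ∀ t, HasDerivAt f (f' t) t) (hf' : ∀ t, HasDerivAt f' (f'' t) t)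
    (a h : ℝ) (hh : 0 < h) :
    ∃ ξ, |ξ - a| ≤ |h| ∧ (f (a + h) - 2 * f a + f (a - h)) / h ^ 2 = f'' ξ := by
  set F : ℝ → ℝ := fun t => f (a + t) + f (a - t) with hF
  set F' : ℝ → ℝ := fun t => f' (a + t) - f' (a - t) with hF'
  have hFd : ∀ t : ℝ, HasDerivAt F (F' t) t := by
    intro t
    have h1 : HasDerivAt (fun t : ℝ => f (a + t)) (f' (a + t)) t := by
      have := (hf (a + t)).comp t ((hasDerivAt_id t).const_add a)
      simpa [Function.comp_def] using this
    have h2 : HasDerivAt (fun t : ℝ => f (a - t)) (-f' (a - t)) t := by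
      have := (hf (a - t)).comp t ((hasDerivAt_id t).const_sub a)
      simpa [Function.comp_def] using this
    exact (h1.add h2).congr_deriv (by show f' (a + t) + -f' (a - t) = f' (a + t) - f' (a - t); ring)
  have hGd : ∀ t : ℝ, HasDerivAt (fun t : ℝ => t ^ 2) (2 * t) t := by
    intro t
    simpa using hasDerivAt_pow 2 t
  obtain ⟨c, hc, hceq⟩ := exists_ratio_hasDerivAt_eq_ratio_slope F F' (a := 0) (b := h) hh
    ((continuous_iff_continuousAt.2 fun t => (hFd t).continuousAt).continuousOn)
    (fun t _ => hFd t)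
    (fun t : ℝ => t ^ 2) (fun t : ℝ => 2 * t)
    ((continuous_pow 2).continuousOn) (fun t _ => hGd t)
  -- hceq : (h^2 - 0^2) * F' c = (F h - F 0) * (2 * c)
  have hc0 : 0 < c := hc.1
  obtain ⟨ξ, hξ1, hξ2, hξeq⟩ := mvt_slope f' f'' hf' (a - c) (a + c) (by linarith)
  refine ⟨ξ, ?_, ?_⟩
  · have : |ξ - a| < c := abs_lt.2 ⟨by linarith, by linarith⟩
    rw [abs_of_pos hh]; linarith [hc.2]
  · have hd : f' (a + c) - f' (a - c) = f'' ξ * (2 * c) := by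
      have h2c : (a + c) - (a - c) = 2 * c := by ring
      rw [h2c] at hξeq
      field_simp at hξeq
      linarith
    simp only [hF, hF', add_zero, sub_zero] at hceq
    rw [hd] at hceq
    have hS : (f (a + h) - 2 * f a + f (a - h)) * (2 * c) = f'' ξ * h ^ 2 * (2 * c) := by
      linear_combination -hceq
    have := mul_right_cancel₀ (by positivity : (2 : ℝ) * c ≠ 0) hS
    field_simp [pow_ne_zero 2 hh.ne']
    linarith [this]

lemma second_diff (f f' f'' : ℝ → ℝ)
    (hf : ∀ t, HasDerivAt f (f' t) t) (hf' : ∀ t, HasDerivAt f' (f'' t) t)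
    (a h : ℝ) (hh : h ≠ 0) :
    ∃ ξ, |ξ - a| ≤ |h| ∧ (f (a + h) - 2 * f a + f (a - h)) / h ^ 2 = f'' ξ := by
  rcases lt_or_gt_of_ne hh with hneg | hpos
  · obtain ⟨ξ, h1, h2⟩ := second_diff_pos f f' f'' hf hf' a (-h) (by linarith)
    refine ⟨ξ, by simpa using h1, ?_⟩
    rw [← h2]
    ring_nf
  · exact second_diff_pos f f' f'' hf hf' a h hpos

lemma tendsto_aux (g : ℝ × ℝ → ℝ) (hg : Continuous g) (c : ℝ × ℝ)
    (u : ℝ → ℝ) (C : ℝ) (hC : 0 ≤ C)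
    (H : ∀ h : ℝ, h ≠ 0 → ∃ p, dist p c ≤ C * |h| ∧ u h = g p) :
    Tendsto u (𝓝[≠] (0 : ℝ)) (𝓝 (g c)) := by
  rw [Metric.tendsto_nhdsWithin_nhds]
  intro ε hε
  obtain ⟨δ, hδ, hδε⟩ := Metric.continuousAt_iff.1 (hg.continuousAt (x := c)) ε hε
  refine ⟨δ / (C + 1), by positivity, ?_⟩
  intro h hne hdist
  obtain ⟨p, hp, hup⟩ := H h hne
  rw [Real.dist_eq, sub_zero] at hdist
  have hpc : dist p c < δ := by
    calc dist p c ≤ C * |h| := hp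
      _ < C * (δ / (C + 1)) + δ / (C + 1) := by nlinarith [abs_nonneg h]
      _ = δ := by field_simp
  rw [hup]; exact hδε hpc

lemma fwd_diff (f f' : ℝ → ℝ) (hf : ∀ t, HasDerivAt f (f' t) t)
    (a h : ℝ) (hh : h ≠ 0) :
    ∃ ξ, |ξ - a| ≤ |h| ∧ (f (a + h) - f a) / h = f' ξ := by
  rcases lt_or_gt_of_ne hh with hneg | hpos
  · obtain ⟨ξ, h1, h2, h3⟩ := mvt_slope f f' hf (a + h) a (by linarith)
    refine ⟨ξ, ?_, ?_⟩
    · rw [abs_of_neg hneg]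
      exact abs_le.2 ⟨by linarith, by linarith⟩
    · rw [show f a - f (a + h) = -(f (a + h) - f a) by ring,
        show a - (a + h) = -h by ring, neg_div_neg_eq] at h3
      exact h3
  · obtain ⟨ξ, h1, h2, h3⟩ := mvt_slope f f' hf a (a + h) (by linarith)
    refine ⟨ξ, ?_, ?_⟩
    · rw [abs_of_pos hpos]
      exact abs_le.2 ⟨by linarith, by linarith⟩
    · rw [show a + h - a = h by ring] at h3
      exact h3

theorem falkowich_karman_scheme_consistency
    (φ : ℝ × ℝ → ℝ) (hφ : ContDiff ℝ 2 φ) (K γ x y : ℝ)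
    (Dx Dxx Dyy : ℝ → ℝ → ℝ → ℝ)
    (hDx : ∀ h a b : ℝ, Dx h a b = (φ (a + h, b) - φ (a, b)) / h)
    (hDxx : ∀ h a b : ℝ,
      Dxx h a b = (φ (a + h, b) - 2 * φ (a, b) + φ (a - h, b)) / h ^ 2)
    (hDyy : ∀ h a b : ℝ,
      Dyy h a b = (φ (a, b + h) - 2 * φ (a, b) + φ (a, b - h)) / h ^ 2)
    (S : ℝ → ℝ)
    (hS : ∀ h : ℝ,
      S h =
        Dxx h x y *
            (Dxx h (x - h) y *
                (K - ((γ + 1) / 2) * (Dx h (x + h) y + Dx h (x - h) y)) +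
              Dyy h (x - h) y) +
          Dxx h (x - h) y *
            (Dxx h x y *
                (K - ((γ + 1) / 2) * (Dx h (x + h) y + Dx h (x - h) y)) +
              Dyy h x y))
    (px pxx pyy : ℝ)
    (hpx : px = deriv (fun s => φ (s, y)) x)
    (hpxx : pxx = deriv (fun s => deriv (fun s' => φ (s', y)) s) x)
    (hpyy : pyy = deriv (fun s => deriv (fun s' => φ (x, s')) s) y) :
    Tendsto S (𝓝[≠] (0 : ℝ))
        (𝓝 (2 * pxx * ((K - (γ + 1) * px) * pxx + pyy))) ∧
      (pxx * (K - (γ + 1) * px) + pyy = 0 →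
        Tendsto S (𝓝[≠] (0 : ℝ)) (𝓝 0)) := by
  -- partial derivative functions
  set g1 : ℝ × ℝ → ℝ := fun p => fderiv ℝ φ p (1, 0) with hg1def
  set g1y : ℝ × ℝ → ℝ := fun p => fderiv ℝ φ p (0, 1) with hg1ydef
  have hφ1 : ContDiff ℝ 1 (fderiv ℝ φ) := hφ.fderiv_right (by norm_num)
  have hg1 : ContDiff ℝ 1 g1 :=
    (ContinuousLinearMap.apply ℝ ℝ (((1 : ℝ), (0 : ℝ)) : ℝ × ℝ)).contDiff.comp hφ1
  have hg1y : ContDiff ℝ 1 g1y :=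
    (ContinuousLinearMap.apply ℝ ℝ (((0 : ℝ), (1 : ℝ)) : ℝ × ℝ)).contDiff.comp hφ1
  set g2 : ℝ × ℝ → ℝ := fun p => fderiv ℝ g1 p (1, 0) with hg2def
  set g2y : ℝ × ℝ → ℝ := fun p => fderiv ℝ g1y p (0, 1) with hg2ydef
  have hg2c : Continuous g2 :=
    (ContinuousLinearMap.apply ℝ ℝ (((1 : ℝ), (0 : ℝ)) : ℝ × ℝ)).continuous.comp
      (hg1.continuous_fderiv one_ne_zero)
  have hg2yc : Continuous g2y :=
    (ContinuousLinearMap.apply ℝ ℝ (((0 : ℝ), (1 : ℝ)) : ℝ × ℝ)).continuous.comp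
      (hg1y.continuous_fderiv one_ne_zero)
  -- slice derivatives
  have hslice : ∀ (ψ : ℝ × ℝ → ℝ), Differentiable ℝ ψ → ∀ a b : ℝ,
      HasDerivAt (fun s => ψ (s, b)) (fderiv ℝ ψ (a, b) (1, 0)) a := by
    intro ψ hψ a b
    have hL : HasDerivAt (fun s : ℝ => ((s, b) : ℝ × ℝ)) (((1 : ℝ), (0 : ℝ))) a :=
      HasDerivAt.prodMk (hasDerivAt_id a) (hasDerivAt_const a b)
    exact (hψ (a, b)).hasFDerivAt.comp_hasDerivAt a hL
  have hslicey : ∀ (ψ : ℝ × ℝ → ℝ), Differentiable ℝ ψ → ∀ a b : ℝ,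
      HasDerivAt (fun t => ψ (a, t)) (fderiv ℝ ψ (a, b) (0, 1)) b := by
    intro ψ hψ a b
    have hL : HasDerivAt (fun t : ℝ => ((a, t) : ℝ × ℝ)) (((0 : ℝ), (1 : ℝ))) b :=
      HasDerivAt.prodMk (hasDerivAt_const b a) (hasDerivAt_id b)
    exact (hψ (a, b)).hasFDerivAt.comp_hasDerivAt b hL
  have hφd : Differentiable ℝ φ := hφ.differentiable (by norm_num)
  have hD1 : ∀ a b : ℝ, HasDerivAt (fun s => φ (s, b)) (g1 (a, b)) a :=
    fun a b => hslice φ hφd a b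
  have hD1y : ∀ a b : ℝ, HasDerivAt (fun t => φ (a, t)) (g1y (a, b)) b :=
    fun a b => hslicey φ hφd a b
  have hD2 : ∀ a b : ℝ, HasDerivAt (fun s => g1 (s, b)) (g2 (a, b)) a :=
    fun a b => hslice g1 (hg1.differentiable one_ne_zero) a b
  have hD2y : ∀ a b : ℝ, HasDerivAt (fun t => g1y (a, t)) (g2y (a, b)) b :=
    fun a b => hslicey g1y (hg1y.differentiable one_ne_zero) a b
  -- identification of px, pxx, pyy
  have epx : px = g1 (x, y) := hpx.trans (hD1 x y).deriv
  have epxx : pxx = g2 (x, y) := by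
    have e : (fun s => deriv (fun s' => φ (s', y)) s) = fun s => g1 (s, y) :=
      funext fun s => (hD1 s y).deriv
    rw [hpxx, e]
    exact (hD2 x y).deriv
  have epyy : pyy = g2y (x, y) := by
    have e : (fun s => deriv (fun s' => φ (x, s')) s) = fun s => g1y (x, s) :=
      funext fun s => (hD1y x s).deriv
    rw [hpyy, e]
    exact (hD2y x y).deriv
  -- the six limits
  have T1 : Tendsto (fun h => Dx h (x + h) y) (𝓝[≠] (0 : ℝ)) (𝓝 (g1 (x, y))) := by
    apply tendsto_aux g1 hg1.continuous (x, y) _ 2 (by norm_num)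
    intro h hne
    obtain ⟨ξ, hb, he⟩ := fwd_diff (fun s => φ (s, y)) (fun s => g1 (s, y))
      (fun t => hD1 t y) (x + h) h hne
    refine ⟨(ξ, y), ?_, ?_⟩
    · rw [Prod.dist_eq]
      simp only [Real.dist_eq, sub_self, abs_zero, max_le_iff]
      constructor
      · rw [show ξ - x = (ξ - (x + h)) + h by ring]
        calc |ξ - (x + h) + h| ≤ |ξ - (x + h)| + |h| := abs_add_le _ _
          _ ≤ 2 * |h| := by linarith
      · positivity
    · rw [hDx]; exact he
  have T2 : Tendsto (fun h => Dx h (x - h) y) (𝓝[≠] (0 : ℝ)) (𝓝 (g1 (x, y))) := by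
    apply tendsto_aux g1 hg1.continuous (x, y) _ 2 (by norm_num)
    intro h hne
    obtain ⟨ξ, hb, he⟩ := fwd_diff (fun s => φ (s, y)) (fun s => g1 (s, y))
      (fun t => hD1 t y) (x - h) h hne
    refine ⟨(ξ, y), ?_, ?_⟩
    · rw [Prod.dist_eq]
      simp only [Real.dist_eq, sub_self, abs_zero, max_le_iff]
      constructor
      · rw [show ξ - x = (ξ - (x - h)) + (-h) by ring]
        calc |ξ - (x - h) + (-h)| ≤ |ξ - (x - h)| + |(-h)| := abs_add_le _ _
          _ ≤ 2 * |h| := by rw [abs_neg]; linarith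
      · positivity
    · rw [hDx]; exact he
  have T3 : Tendsto (fun h => Dxx h x y) (𝓝[≠] (0 : ℝ)) (𝓝 (g2 (x, y))) := by
    apply tendsto_aux g2 hg2c (x, y) _ 1 (by norm_num)
    intro h hne
    obtain ⟨ξ, hb, he⟩ := second_diff (fun s => φ (s, y)) (fun s => g1 (s, y))
      (fun s => g2 (s, y)) (fun t => hD1 t y) (fun t => hD2 t y) x h hne
    refine ⟨(ξ, y), ?_, ?_⟩
    · rw [Prod.dist_eq]
      simp only [Real.dist_eq, sub_self, abs_zero, max_le_iff]
      exact ⟨by linarith, by positivity⟩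
    · rw [hDxx]; exact he
  have T4 : Tendsto (fun h => Dxx h (x - h) y) (𝓝[≠] (0 : ℝ)) (𝓝 (g2 (x, y))) := by
    apply tendsto_aux g2 hg2c (x, y) _ 2 (by norm_num)
    intro h hne
    obtain ⟨ξ, hb, he⟩ := second_diff (fun s => φ (s, y)) (fun s => g1 (s, y))
      (fun s => g2 (s, y)) (fun t => hD1 t y) (fun t => hD2 t y) (x - h) h hne
    refine ⟨(ξ, y), ?_, ?_⟩
    · rw [Prod.dist_eq]
      simp only [Real.dist_eq, sub_self, abs_zero, max_le_iff]
      constructor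
      · rw [show ξ - x = (ξ - (x - h)) + (-h) by ring]
        calc |ξ - (x - h) + (-h)| ≤ |ξ - (x - h)| + |(-h)| := abs_add_le _ _
          _ ≤ 2 * |h| := by rw [abs_neg]; linarith
      · positivity
    · rw [hDxx]; exact he
  have T5 : Tendsto (fun h => Dyy h x y) (𝓝[≠] (0 : ℝ)) (𝓝 (g2y (x, y))) := by
    apply tendsto_aux g2y hg2yc (x, y) _ 1 (by norm_num)
    intro h hne
    obtain ⟨ξ, hb, he⟩ := second_diff (fun t => φ (x, t)) (fun t => g1y (x, t))
      (fun t => g2y (x, t)) (fun t => hD1y x t) (fun t => hD2y x t) y h hne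
    refine ⟨(x, ξ), ?_, ?_⟩
    · rw [Prod.dist_eq]
      simp only [Real.dist_eq, sub_self, abs_zero, max_le_iff]
      exact ⟨by positivity, by linarith⟩
    · rw [hDyy]; exact he
  have T6 : Tendsto (fun h => Dyy h (x - h) y) (𝓝[≠] (0 : ℝ)) (𝓝 (g2y (x, y))) := by
    apply tendsto_aux g2y hg2yc (x, y) _ 1 (by norm_num)
    intro h hne
    obtain ⟨ξ, hb, he⟩ := second_diff (fun t => φ (x - h, t)) (fun t => g1y (x - h, t))
      (fun t => g2y (x - h, t)) (fun t => hD1y (x - h) t) (fun t => hD2y (x - h) t) y h hne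
    refine ⟨(x - h, ξ), ?_, ?_⟩
    · rw [Prod.dist_eq]
      simp only [Real.dist_eq, max_le_iff]
      constructor
      · rw [show x - h - x = -h by ring, abs_neg, one_mul]
      · rw [one_mul]; linarith
    · rw [hDyy]; exact he
  -- assemble
  have Tfac : Tendsto (fun h => K - ((γ + 1) / 2) * (Dx h (x + h) y + Dx h (x - h) y))
      (𝓝[≠] (0 : ℝ)) (𝓝 (K - ((γ + 1) / 2) * (g1 (x, y) + g1 (x, y)))) :=
    tendsto_const_nhds.sub (tendsto_const_nhds.mul (T1.add T2))
  have Tbig : Tendsto S (𝓝[≠] (0 : ℝ))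
      (𝓝 (g2 (x, y) * (g2 (x, y) * (K - ((γ + 1) / 2) * (g1 (x, y) + g1 (x, y))) + g2y (x, y)) +
        g2 (x, y) * (g2 (x, y) * (K - ((γ + 1) / 2) * (g1 (x, y) + g1 (x, y))) + g2y (x, y)))) := by
    have hfun : S = fun h =>
        Dxx h x y *
            (Dxx h (x - h) y *
                (K - ((γ + 1) / 2) * (Dx h (x + h) y + Dx h (x - h) y)) +
              Dyy h (x - h) y) +
          Dxx h (x - h) y *
            (Dxx h x y *
                (K - ((γ + 1) / 2) * (Dx h (x + h) y + Dx h (x - h) y)) +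
              Dyy h x y) := funext hS
    rw [hfun]
    exact (T3.mul ((T4.mul Tfac).add T6)).add (T4.mul ((T3.mul Tfac).add T5))
  have hTfirst : Tendsto S (𝓝[≠] (0 : ℝ))
      (𝓝 (2 * pxx * ((K - (γ + 1) * px) * pxx + pyy))) := by
    have hval : 2 * pxx * ((K - (γ + 1) * px) * pxx + pyy) =
        g2 (x, y) * (g2 (x, y) * (K - ((γ + 1) / 2) * (g1 (x, y) + g1 (x, y))) + g2y (x, y)) +
          g2 (x, y) * (g2 (x, y) * (K - ((γ + 1) / 2) * (g1 (x, y) + g1 (x, y))) + g2y (x, y)) := by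
      rw [epx, epxx, epyy]; ring
    rw [hval]
    exact Tbig
  refine ⟨hTfirst, ?_⟩
  intro heq
  have h0 : (K - (γ + 1) * px) * pxx + pyy = 0 := by linear_combination heq
  rw [h0, mul_zero] at hTfirst
  exact hTfirst
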